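/- For every natural number n ≥ 4 there exists a solution to the (n,2)-queens problem, i.e., a non-attacking set of n queens on the (n,2)-board. -/
import Mathlib


/-- A point `q` lies on the `(n,d)`-board, i.e. all coordinates are in `{1,…,n}`. -/
def onBoard (n d : ℕ) (q : Fin d → ℕ) : Prop :=
  ∀ i, 1 ≤ q i ∧ q i ≤ n

/-- Queen `a` attacks queen `b`: there are an integer `m` and a nonzero vector
`ε ∈ {-1,0,1}^d` with `a i = ε i * m + b i` for all `i`. -/
def attacks {d : ℕ} (a b : Fin d → ℕ) : Prop :=
  ∃ (m : ℤ) (ε : Fin d → ℤ), (∀ i, ε i = -1 ∨ ε i = 0 ∨ ε i = 1) ∧ ε ≠ 0 ∧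
    ∀ i, (a i : ℤ) = ε i * m + (b i : ℤ)

/-- A set of queens is non-attacking if no two distinct members attack each other. -/
def nonAttacking {d : ℕ} (Q : Finset (Fin d → ℕ)) : Prop :=
  ∀ a ∈ Q, ∀ b ∈ Q, a ≠ b → ¬ attacks a b

/-- A partial solution on the `(n,d)`-board: a non-attacking set fitting the board. -/
def isPartial (n d : ℕ) (Q : Finset (Fin d → ℕ)) : Prop :=
  (∀ q ∈ Q, onBoard n d q) ∧ nonAttacking Q

/-- A solution to the `(n,d)`-queens problem: a non-attacking set of `n^(d-1)` queens. -/
def isSolution (n d : ℕ) (Q : Finset (Fin d → ℕ)) : Prop :=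
  isPartial n d Q ∧ Q.card = n ^ (d - 1)

/-- The `(n,d)`-board as a finite set. -/
def boardFinset (n d : ℕ) : Finset (Fin d → ℕ) :=
  Fintype.piFinset fun _ => Finset.Icc 1 n

/-- `Qmax n d` : the maximum cardinality of a non-attacking set on the `(n,d)`-board. -/
noncomputable def Qmax (n d : ℕ) : ℕ :=
  sSup {k | ∃ Q : Finset (Fin d → ℕ), isPartial n d Q ∧ Q.card = k}

/-- For every `n ≥ 4` the `(n,2)`-queens problem has a solution:
a non-attacking set of `n` queens on the `(n,2)`-board. -/


def qcol (n i : ℕ) : ℕ :=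
  if n % 2 = 1 ∧ i = n then n
  else if (2 * (n / 2)) % 6 ≠ 2 then
    (if i ≤ n / 2 then 2 * i else 2 * i - 2 * (n / 2) - 1)
  else
    (if i ≤ n / 2 then
       (if 2 * i + n / 2 ≤ 2 * (n / 2) + 2 then 2 * i + n / 2 - 2 else 2 * i - n / 2 - 2)
     else
       (if 2 * i + 1 ≤ 2 * (n / 2) + n / 2 then 2 * i + 1 - n / 2
        else 2 * i + 1 - n / 2 - 2 * (n / 2)))

lemma qcol_range (n i : ℕ) (hn : 4 ≤ n) (hi1 : 1 ≤ i) (hi2 : i ≤ n) :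
    1 ≤ qcol n i ∧ qcol n i ≤ n := by
  unfold qcol; split_ifs <;> omega

lemma qcol_key (n i j : ℕ) (hn : 4 ≤ n) (hi1 : 1 ≤ i) (hi2 : i ≤ n)
    (hj1 : 1 ≤ j) (hj2 : j ≤ n)
    (h : qcol n i = qcol n j ∨ i + qcol n i = j + qcol n j ∨ i + qcol n j = j + qcol n i) :
    i = j := by
  unfold qcol at h; split_ifs at h <;> omega

theorem nQueens_two_dim_exists (n : ℕ) (hn : 4 ≤ n) :
    ∃ Q : Finset (Fin 2 → ℕ), isSolution n 2 Q := by
  refine ⟨(Finset.Icc 1 n).image (fun i => ![i, qcol n i]), ⟨⟨?_, ?_⟩, ?_⟩⟩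
  · intro q hq
    simp only [Finset.mem_image, Finset.mem_Icc] at hq
    obtain ⟨i, ⟨hi1, hi2⟩, rfl⟩ := hq
    intro k
    fin_cases k
    · simpa using ⟨hi1, hi2⟩
    · simpa using qcol_range n i hn hi1 hi2
  · intro a ha b hb hab hatk
    simp only [Finset.mem_image, Finset.mem_Icc] at ha hb
    obtain ⟨i, ⟨hi1, hi2⟩, rfl⟩ := ha
    obtain ⟨j, ⟨hj1, hj2⟩, rfl⟩ := hb
    obtain ⟨m, ε, hε, hne, heq⟩ := hatk
    have e0 := heq 0
    have e1 := heq 1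
    simp only [Matrix.cons_val_zero, Matrix.cons_val_one, Matrix.head_cons] at e0 e1
    rcases hε 0 with h0 | h0 | h0 <;> rcases hε 1 with h1 | h1 | h1 <;>
      rw [h0] at e0 <;> rw [h1] at e1
    case _ => -- -1, -1
      have := qcol_key n i j hn hi1 hi2 hj1 hj2 (by omega)
      subst this; exact hab rfl
    case _ =>
      have := qcol_key n i j hn hi1 hi2 hj1 hj2 (by omega)
      subst this; exact hab rfl
    case _ =>
      have := qcol_key n i j hn hi1 hi2 hj1 hj2 (by omega)
      subst this; exact hab rfl
    case _ =>
      have : i = j := by omega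
      subst this
      exact hab rfl
    case _ =>
      exact hne (funext fun k => by fin_cases k <;> simp [h0, h1])
    case _ =>
      have : i = j := by omega
      subst this
      exact hab rfl
    case _ =>
      have := qcol_key n i j hn hi1 hi2 hj1 hj2 (by omega)
      subst this; exact hab rfl
    case _ =>
      have := qcol_key n i j hn hi1 hi2 hj1 hj2 (by omega)
      subst this; exact hab rfl
    case _ =>
      have := qcol_key n i j hn hi1 hi2 hj1 hj2 (by omega)
      subst this; exact hab rfl
  · rw [Finset.card_image_of_injOn, Nat.card_Icc]
    · simp
    · intro i _ j _ h
      simpa using congrFun h 0
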